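/- Parallel form of the causal diagonal-decay recurrence: for k = 1,…,L let a_k ∈ ℝ^d, Λ_k = diag(a_k), and define S_0 = 0 ∈ ℝ^{d×d}, S_i = Λ_i S_{i−1} + k_i v_i^⊤, y_i = (q_i^⊤ S_i)^⊤. Then for every i, y_i = Σ_{j=1}^{i} (q_i^⊤ Λ_i Λ_{i−1} ⋯ Λ_{j+1} k_j) v_j; if moreover all entries of every a_k are nonzero, then with m_i = a_1 ⊙ ⋯ ⊙ a_i one has y_i = Σ_{j=1}^{i} ⟨q_i ⊙ m_i, k_j ⊙ m_j^{∘−1}⟩ v_j, i.e., the stacked outputs equal Tril[(Q ⊙ 𝐋)(K ⊙ Inv(𝐋))^⊤] V, where 𝐋 ∈ ℝ^{L×d} has i-th row m_i, Inv is the entrywise inverse, Q ⊙ 𝐋 is the entrywise product of matrices, and Tril keeps the lower-triangular part (including the diagonal) of a matrix. -/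

import Mathlib

open Matrix Finset

/-- `lamProd a j i = Λ_i Λ_{i-1} ⋯ Λ_{j+1}` where `Λ_t = diag (a t)`;
empty products (when `i ≤ j`) equal the identity. -/
noncomputable def lamProd {d : ℕ} (a : ℕ → Fin d → ℝ) (j : ℕ) :
    ℕ → Matrix (Fin d) (Fin d) ℝ
  | 0 => 1
  | (i + 1) => if i + 1 ≤ j then 1 else Matrix.diagonal (a (i + 1)) * lamProd a j i

/-- Forward cumulative entrywise product `m_i = a_1 ⊙ a_2 ⊙ ⋯ ⊙ a_i`
(with `m_0` the all-ones vector). -/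
noncomputable def mcum {d : ℕ} (a : ℕ → Fin d → ℝ) (i : ℕ) : Fin d → ℝ :=
  fun x => ∏ t ∈ Finset.Icc 1 i, a t x

lemma lamProd_eq_diagonal {d : ℕ} (a : ℕ → Fin d → ℝ) (j : ℕ) :
    ∀ i, j ≤ i → lamProd a j i = Matrix.diagonal (fun x => ∏ t ∈ Finset.Icc (j+1) i, a t x) := by
  intro i
  induction i with
  | zero =>
    intro h
    have : j = 0 := Nat.le_zero.mp h
    subst this
    simp [lamProd, Matrix.diagonal_one]
  | succ i ih =>
    intro h
    by_cases h' : i + 1 ≤ j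
    · have : j = i + 1 := le_antisymm h h'
      subst this
      simp [lamProd, Matrix.diagonal_one, Finset.Icc_eq_empty_of_lt (by omega : i+1+1 > i+1)]
    · have hj : j ≤ i := by omega
      simp only [lamProd, if_neg h', ih hj, Matrix.diagonal_mul_diagonal]
      apply congrArg Matrix.diagonal
      funext x
      rw [Finset.prod_Icc_succ_top (by omega : j + 1 ≤ i + 1)]
      ring

lemma S_eq {L d : ℕ} (k v : ℕ → (Fin d → ℝ)) (a : ℕ → (Fin d → ℝ))
    (S : ℕ → Matrix (Fin d) (Fin d) ℝ)
    (hS0 : S 0 = 0)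
    (hS : ∀ i, 1 ≤ i → i ≤ L →
      S i = Matrix.diagonal (a i) * S (i - 1) + vecMulVec (k i) (v i)) :
    ∀ i, i ≤ L → S i = ∑ j ∈ Finset.Icc 1 i, lamProd a j i * vecMulVec (k j) (v j) := by
  intro i
  induction i with
  | zero => intro _; simp [hS0]
  | succ i ih =>
    intro hle
    rw [hS (i+1) (by omega) hle]
    simp only [Nat.add_sub_cancel]
    rw [ih (by omega)]
    rw [Finset.mul_sum]
    rw [Finset.sum_Icc_succ_top (by omega : 1 ≤ i + 1)]
    congr 1
    · apply Finset.sum_congr rfl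
      intro j hj
      simp only [Finset.mem_Icc] at hj
      rw [← Matrix.mul_assoc]
      congr 1
      show _ = lamProd a j (i + 1)
      rw [show lamProd a j (i+1) = if i + 1 ≤ j then 1 else Matrix.diagonal (a (i + 1)) * lamProd a j i from rfl]
      rw [if_neg (by omega)]
    · rw [show lamProd a (i+1) (i+1) = if i + 1 ≤ i + 1 then 1 else Matrix.diagonal (a (i + 1)) * lamProd a (i+1) i from rfl]
      rw [if_pos le_rfl, one_mul]

lemma vecMul_sum' {d : ℕ} {s : Finset ℕ} (x : Fin d → ℝ) (M : ℕ → Matrix (Fin d) (Fin d) ℝ) :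
    x ᵥ* (∑ j ∈ s, M j) = ∑ j ∈ s, x ᵥ* M j := by
  induction s using Finset.cons_induction with
  | empty => simp [Matrix.vecMul_zero]
  | cons j s hj ih =>
    rw [Finset.sum_cons, Finset.sum_cons, Matrix.vecMul_add, ih]

theorem causal_diagonal_decay_parallel_form
    (L d : ℕ) (hL : 0 < L) (hd : 0 < d)
    (q k v : ℕ → (Fin d → ℝ)) (a : ℕ → (Fin d → ℝ))
    (S : ℕ → Matrix (Fin d) (Fin d) ℝ)
    (hS0 : S 0 = 0)
    (hS : ∀ i, 1 ≤ i → i ≤ L →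
      S i = Matrix.diagonal (a i) * S (i - 1) + vecMulVec (k i) (v i)) :
    (∀ i, 1 ≤ i → i ≤ L →
        q i ᵥ* S i =
          ∑ j ∈ Finset.Icc 1 i, ((q i ᵥ* lamProd a j i) ⬝ᵥ k j) • v j)
    ∧ ((∀ t x, 1 ≤ t → t ≤ L → a t x ≠ 0) →
        ∀ i, 1 ≤ i → i ≤ L →
          q i ᵥ* S i =
            ∑ j ∈ Finset.Icc 1 i,
              ((q i * mcum a i) ⬝ᵥ (k j * (mcum a j)⁻¹)) • v j) := by
  have main : ∀ i, 1 ≤ i → i ≤ L →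
      q i ᵥ* S i = ∑ j ∈ Finset.Icc 1 i, ((q i ᵥ* lamProd a j i) ⬝ᵥ k j) • v j := by
    intro i h1 h2
    rw [S_eq k v a S hS0 hS i h2, vecMul_sum' (q i) _]
    apply Finset.sum_congr rfl
    intro j hj
    rw [← Matrix.vecMul_vecMul]
    funext y
    simp [Matrix.vecMul, dotProduct, Matrix.vecMulVec_apply, Finset.sum_mul, mul_assoc]
  refine ⟨main, fun ha i h1 h2 => ?_⟩
  rw [main i h1 h2]
  apply Finset.sum_congr rfl
  intro j hj
  simp only [Finset.mem_Icc] at hj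
  congr 1
  rw [lamProd_eq_diagonal a j i hj.2]
  show ∑ x, _ = ∑ x, _
  apply Finset.sum_congr rfl
  intro x _
  rw [Matrix.vecMul_diagonal]
  simp only [Pi.mul_apply, Pi.inv_apply, mcum]
  have hsplit : (∏ t ∈ Finset.Icc 1 i, a t x) =
      (∏ t ∈ Finset.Icc 1 j, a t x) * ∏ t ∈ Finset.Icc (j+1) i, a t x := by
    rw [(by simpa using Finset.Icc_add_one_left_eq_Ioc 0 i : Finset.Icc 1 i = Finset.Ioc 0 i), (by simpa using Finset.Icc_add_one_left_eq_Ioc 0 j : Finset.Icc 1 j = Finset.Ioc 0 j), Finset.Icc_add_one_left_eq_Ioc,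
      Finset.prod_Ioc_consecutive _ (Nat.zero_le j) hj.2]
  have hmj : (∏ t ∈ Finset.Icc 1 j, a t x) ≠ 0 := by
    apply Finset.prod_ne_zero_iff.mpr
    intro t ht
    simp only [Finset.mem_Icc] at ht
    exact ha t x ht.1 (by omega)
  rw [hsplit]
  field_simp
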